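/- For every integer m ≥ 0, the following identity holds in K[[z]]: z · S^{(ν+2)}_m(z) / S^{(ν+1)}_{m+1}(z) = (Qqz/(Qq−1)) · G_0(z²), where G_m(w) := 1/(1 − b_m w) and, for 0 ≤ i < m, G_i(w) := 1/(1 − b_i w − a_{i+1} w · G_{i+1}(w)), with b_n := Qq^{n+1}/(1 − Qq^{n+1}) and a_n := Q²q^{2n+1}/((1 − Qq^n)(1 − Qq^{n+1})). Equivalently (Theorem 5.1): R_{m,ν+2}(z;q^{−1})/R_{m+1,ν+1}(z;q^{−1}) = (q^{ν+1}z/(q^{ν+1}−1)) · ∑_{n≥0} μ_n^{≤m} z^{2n}, where the μ_n^{≤m} are the coefficients of the finite continued fraction G_0, i.e. the moments of the orthogonal polynomials of type R_I with recurrence data (b, a, λ = 0). -/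

import Mathlib

noncomputable section

/-- `K`, the fraction field of `ℚ[q,Q]` (`Q` plays the role of `q^ν`). -/
abbrev K : Type := FractionRing (MvPolynomial (Fin 2) ℚ)

def qv : K := algebraMap (MvPolynomial (Fin 2) ℚ) K (MvPolynomial.X 0)
def Qv : K := algebraMap (MvPolynomial (Fin 2) ℚ) K (MvPolynomial.X 1)

/-- `Spoly s m = S^{(ν+s)}_m(z) = z^m R_{m,ν+s}(z;q⁻¹)`, the renormalized `q`-Lommel
polynomials of Koelink–Swarttouw with base `q⁻¹` and `Q` in place of `q^ν`:
`S_0 = 1`, `S_{-1} = 0` and `S_{m+1} = (z² + 1 − Q⁻¹q^{−m−s}) S_m − z² S_{m−1}`. -/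
def Spoly (s : ℕ) : ℕ → PowerSeries K
  | 0 => 1
  | 1 => PowerSeries.X ^ 2 + PowerSeries.C (1 - Qv⁻¹ * qv⁻¹ ^ s)
  | m + 2 =>
      (PowerSeries.X ^ 2 + PowerSeries.C (1 - Qv⁻¹ * qv⁻¹ ^ (m + 1 + s))) *
          Spoly s (m + 1)
        - PowerSeries.X ^ 2 * Spoly s m

/-- `b_n = Q q^{n+1}/(1 − Q q^{n+1})`. -/
def bSeq (n : ℕ) : K := Qv * qv ^ (n + 1) / (1 - Qv * qv ^ (n + 1))

/-- `a_n = Q² q^{2n+1}/((1 − Q q^n)(1 − Q q^{n+1}))`. -/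
def aSeq (n : ℕ) : K :=
  Qv ^ 2 * qv ^ (2 * n + 1) / ((1 - Qv * qv ^ n) * (1 - Qv * qv ^ (n + 1)))

/-- The levels `G_m, G_{m-1}, …, G_0` of the finite continued fraction, evaluated at
`w = z²`: `contFracG m k = G_{m-k}(z²)` where `G_m(w) = 1/(1 − b_m w)` and
`G_i(w) = 1/(1 − b_i w − a_{i+1} w G_{i+1}(w))`; thus `G_0(z²) = contFracG m m`. -/
def contFracG (m : ℕ) : ℕ → PowerSeries K
  | 0 => (1 - PowerSeries.C (bSeq m) * PowerSeries.X ^ 2)⁻¹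
  | k + 1 =>
      (1 - PowerSeries.C (bSeq (m - k - 1)) * PowerSeries.X ^ 2 -
          PowerSeries.C (aSeq (m - k)) * PowerSeries.X ^ 2 * contFracG m k)⁻¹

lemma qv_ne : qv ≠ 0 := by
  simp [qv, IsFractionRing.to_map_eq_zero_iff, MvPolynomial.X_ne_zero]

lemma Qv_ne : Qv ≠ 0 := by
  simp [Qv, IsFractionRing.to_map_eq_zero_iff, MvPolynomial.X_ne_zero]

lemma poly_ne (n : ℕ) : (1 : K) - Qv * qv ^ (n + 1) ≠ 0 := by
  have h : (1 : K) - Qv * qv ^ (n + 1)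
      = algebraMap (MvPolynomial (Fin 2) ℚ) K
          (1 - MvPolynomial.X 1 * MvPolynomial.X 0 ^ (n + 1)) := by
    simp [qv, Qv, map_sub, map_mul, map_pow]
  rw [h, Ne, IsFractionRing.to_map_eq_zero_iff]
  intro hzero
  have := congrArg (MvPolynomial.eval (fun _ => (0 : ℚ))) hzero
  simp at this

lemma hEne (t : ℕ) : (1 : K) - Qv⁻¹ * qv⁻¹ ^ (t + 1) ≠ 0 := by
  intro h
  apply poly_ne t
  have hx : Qv⁻¹ * qv⁻¹ ^ (t + 1) = 1 := (sub_eq_zero.mp h).symm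
  rw [inv_pow, ← mul_inv, inv_eq_one] at hx
  rw [sub_eq_zero]
  exact hx.symm

def Ecoef (j : ℕ) : K := 1 - Qv⁻¹ * qv⁻¹ ^ (j + 1)

lemma hbE (j : ℕ) : bSeq j * Ecoef j = -1 := by
  unfold bSeq Ecoef
  rw [inv_pow]
  have h1 := poly_ne j
  field_simp [qv_ne, Qv_ne]
  ring

lemma haE (j : ℕ) : aSeq (j + 1) * Ecoef (j + 1) = -(bSeq j) := by
  unfold aSeq bSeq Ecoef
  rw [inv_pow]
  have h1 := poly_ne j
  have h2 := poly_ne (j + 1)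
  field_simp [qv_ne, Qv_ne]
  ring

lemma Spoly_zero (s : ℕ) : Spoly s 0 = 1 := rfl

lemma Spoly_one' (s : ℕ) : Spoly (s + 1) 1 = PowerSeries.X ^ 2 + PowerSeries.C (Ecoef s) := rfl

lemma Spoly_rec (s k : ℕ) :
    Spoly s (k + 2) =
      (PowerSeries.X ^ 2 + PowerSeries.C (1 - Qv⁻¹ * qv⁻¹ ^ (k + 1 + s))) * Spoly s (k + 1)
        - PowerSeries.X ^ 2 * Spoly s k := rfl

lemma Spoly_rec' (s k : ℕ) :
    Spoly (s + 1) (k + 2) =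
      (PowerSeries.X ^ 2 + PowerSeries.C (Ecoef (k + s + 1))) * Spoly (s + 1) (k + 1)
        - PowerSeries.X ^ 2 * Spoly (s + 1) k := by
  rw [Spoly_rec, show k + 1 + (s + 1) = (k + s + 1) + 1 from by omega]
  rfl

lemma star : ∀ k j : ℕ,
    Spoly (j + 1) (k + 2) =
      (PowerSeries.X ^ 2 + PowerSeries.C (Ecoef j)) * Spoly (j + 2) (k + 1)
        - PowerSeries.X ^ 2 * Spoly (j + 3) k := by
  intro k
  induction k using Nat.strong_induction_on with
  | _ k ih =>
    match k with
    | 0 =>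
      intro j
      have e1 : Spoly (j + 1) 2 = (PowerSeries.X ^ 2 + PowerSeries.C (Ecoef (j + 1))) *
          Spoly (j + 1) 1 - PowerSeries.X ^ 2 * Spoly (j + 1) 0 := by
        have := Spoly_rec' j 0
        rw [show 0 + j + 1 = j + 1 from by omega] at this
        exact this
      have e2 : Spoly (j + 2) 1 = PowerSeries.X ^ 2 + PowerSeries.C (Ecoef (j + 1)) :=
        Spoly_one' (j + 1)
      have e3 : Spoly (j + 1) 1 = PowerSeries.X ^ 2 + PowerSeries.C (Ecoef j) :=
        Spoly_one' j
      rw [e1, e2, e3, Spoly_zero, Spoly_zero]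
      ring
    | 1 =>
      intro j
      have e1 : Spoly (j + 1) 3 = (PowerSeries.X ^ 2 + PowerSeries.C (Ecoef (j + 2))) *
          Spoly (j + 1) 2 - PowerSeries.X ^ 2 * Spoly (j + 1) 1 := by
        have := Spoly_rec' j 1
        rw [show 1 + j + 1 = j + 2 from by omega] at this
        exact this
      have e2 : Spoly (j + 1) 2 = (PowerSeries.X ^ 2 + PowerSeries.C (Ecoef (j + 1))) *
          Spoly (j + 1) 1 - PowerSeries.X ^ 2 * Spoly (j + 1) 0 := by
        have := Spoly_rec' j 0
        rw [show 0 + j + 1 = j + 1 from by omega] at this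
        exact this
      have e4 : Spoly (j + 2) 2 = (PowerSeries.X ^ 2 + PowerSeries.C (Ecoef (j + 2))) *
          Spoly (j + 2) 1 - PowerSeries.X ^ 2 * Spoly (j + 2) 0 := by
        have := Spoly_rec' (j + 1) 0
        rw [show 0 + (j + 1) + 1 = j + 2 from by omega] at this
        exact this
      have e5 : Spoly (j + 2) 1 = PowerSeries.X ^ 2 + PowerSeries.C (Ecoef (j + 1)) :=
        Spoly_one' (j + 1)
      have e6 : Spoly (j + 3) 1 = PowerSeries.X ^ 2 + PowerSeries.C (Ecoef (j + 2)) :=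
        Spoly_one' (j + 2)
      have e7 : Spoly (j + 1) 1 = PowerSeries.X ^ 2 + PowerSeries.C (Ecoef j) :=
        Spoly_one' j
      rw [e1, e2, e4, e5, e6, e7, Spoly_zero, Spoly_zero]
      ring
    | (n + 2) =>
      intro j
      have h1 := ih (n + 1) (by omega) j
      have h2 := ih n (by omega) j
      have e1 : Spoly (j + 1) (n + 4) = (PowerSeries.X ^ 2 +
          PowerSeries.C (Ecoef (n + j + 3))) * Spoly (j + 1) (n + 3)
          - PowerSeries.X ^ 2 * Spoly (j + 1) (n + 2) := by
        have := Spoly_rec' j (n + 2)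
        rw [show n + 2 + j + 1 = n + j + 3 from by omega] at this
        exact this
      have e2 : Spoly (j + 2) (n + 3) = (PowerSeries.X ^ 2 +
          PowerSeries.C (Ecoef (n + j + 3))) * Spoly (j + 2) (n + 2)
          - PowerSeries.X ^ 2 * Spoly (j + 2) (n + 1) := by
        have := Spoly_rec' (j + 1) (n + 1)
        rw [show n + 1 + (j + 1) + 1 = n + j + 3 from by omega] at this
        exact this
      have e3 : Spoly (j + 3) (n + 2) = (PowerSeries.X ^ 2 +
          PowerSeries.C (Ecoef (n + j + 3))) * Spoly (j + 3) (n + 1)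
          - PowerSeries.X ^ 2 * Spoly (j + 3) n := by
        have := Spoly_rec' (j + 2) n
        rw [show n + (j + 2) + 1 = n + j + 3 from by omega] at this
        exact this
      rw [e1, e2, e3]
      linear_combination (PowerSeries.X ^ 2 + PowerSeries.C (Ecoef (n + j + 3))) * h1
        - PowerSeries.X ^ 2 * h2

lemma Mlem : ∀ k j : ℕ,
    contFracG (j + k) k * Spoly (j + 1) (k + 1)
      = PowerSeries.C (Ecoef j) * Spoly (j + 2) k := by
  intro k
  induction k with
  | zero =>
    intro j
    have hb : PowerSeries.C (bSeq j) * PowerSeries.C (Ecoef j) = -1 := by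
      rw [← map_mul, hbE j, map_neg, map_one]
    have hfac : Spoly (j + 1) 1
        = PowerSeries.C (Ecoef j) * (1 - PowerSeries.C (bSeq j) * PowerSeries.X ^ 2) := by
      rw [Spoly_one']
      linear_combination (PowerSeries.X ^ 2) * hb
    have hconst : PowerSeries.constantCoeff
        (1 - PowerSeries.C (bSeq j) * PowerSeries.X ^ 2) ≠ 0 := by
      simp
    simp only [Nat.add_zero, contFracG, Spoly_zero, mul_one]
    rw [hfac, ← mul_assoc, mul_comm _ (PowerSeries.C (Ecoef j)), mul_assoc,
      PowerSeries.inv_mul_cancel _ hconst, mul_one]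
  | succ k ihk =>
    intro j
    have hG := ihk (j + 1)
    rw [show j + 1 + 1 = j + 2 from by omega, show j + 1 + 2 = j + 3 from by omega] at hG
    have hstar := star k j
    have hb : PowerSeries.C (bSeq j) * PowerSeries.C (Ecoef j) = -1 := by
      rw [← map_mul, hbE j, map_neg, map_one]
    have ha : PowerSeries.C (aSeq (j + 1)) * PowerSeries.C (Ecoef (j + 1))
        = -PowerSeries.C (bSeq j) := by
      rw [← map_mul, haE j, map_neg]
    simp only [contFracG]
    rw [show j + (k + 1) - k - 1 = j from by omega, show j + (k + 1) - k = j + 1 from by omega,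
      show j + (k + 1) = (j + 1) + k from by omega]
    set den := 1 - PowerSeries.C (bSeq j) * PowerSeries.X ^ 2 -
      PowerSeries.C (aSeq (j + 1)) * PowerSeries.X ^ 2 * contFracG ((j + 1) + k) k with hden_def
    have hden : PowerSeries.constantCoeff den ≠ 0 := by
      rw [hden_def]
      simp
    have hkey : den * (PowerSeries.C (Ecoef j) * Spoly (j + 2) (k + 1))
        = Spoly (j + 1) (k + 2) := by
      rw [hden_def]
      linear_combination (-1 : PowerSeries K) * hstar
        - PowerSeries.C (aSeq (j + 1)) * PowerSeries.C (Ecoef j) * PowerSeries.X ^ 2 * hG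
        + PowerSeries.X ^ 2 * (Spoly (j + 3) k - Spoly (j + 2) (k + 1)) * hb
        - PowerSeries.C (Ecoef j) * PowerSeries.X ^ 2 * Spoly (j + 3) k * ha
    rw [← hkey, ← mul_assoc, PowerSeries.inv_mul_cancel _ hden, one_mul]

lemma Sconst : ∀ k s : ℕ, PowerSeries.constantCoeff (Spoly (s + 1) k) ≠ 0 := by
  intro k
  induction k using Nat.strong_induction_on with
  | _ k ih =>
    match k with
    | 0 => intro s; simp [Spoly_zero]
    | 1 =>
      intro s
      rw [Spoly_one']
      simpa [Ecoef] using hEne s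
    | (n + 2) =>
      intro s
      have h1 := ih (n + 1) (by omega) s
      have hrec := Spoly_rec' s n
      rw [hrec]
      have : PowerSeries.constantCoeff
          ((PowerSeries.X ^ 2 + PowerSeries.C (Ecoef (n + s + 1))) * Spoly (s + 1) (n + 1)
            - PowerSeries.X ^ 2 * Spoly (s + 1) n)
          = Ecoef (n + s + 1) * PowerSeries.constantCoeff (Spoly (s + 1) (n + 1)) := by
        simp
      rw [this]
      exact mul_ne_zero (hEne (n + s + 1)) h1

/-- Theorem 5.1 (finite case): for every `m ≥ 0`,
`z R_{m,ν+2}(z;q⁻¹)/R_{m+1,ν+1}(z;q⁻¹) = (Qqz/(Qq−1)) ⬝ G_0(z²)` in `K[[z]]`, i.e.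
`R_{m,ν+2}(z;q⁻¹)/R_{m+1,ν+1}(z;q⁻¹) = (q^{ν+1}z/(q^{ν+1}−1)) ∑_{n≥0} μ_n^{≤m} z^{2n}`,
the generating function of the moments of the orthogonal polynomials of type `R_I`
with data `(b, a, λ = 0)`. -/
theorem lommel_ratio_eq_moments (m : ℕ) :
    PowerSeries.X * Spoly 2 m * (Spoly 1 (m + 1))⁻¹
      = PowerSeries.C (Qv * qv / (Qv * qv - 1)) * PowerSeries.X * contFracG m m := by
  have hM := Mlem m 0
  simp only [Nat.zero_add] at hM
  have hS1c : PowerSeries.constantCoeff (Spoly 1 (m + 1)) ≠ 0 := Sconst (m + 1) 0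
  have hS1ne : Spoly 1 (m + 1) ≠ 0 := by
    intro h
    rw [h] at hS1c
    simp at hS1c
  have h01 : (1 : K) - Qv * qv ≠ 0 := by
    have := poly_ne 0
    simpa using this
  have h01' : Qv * qv - 1 ≠ 0 := by
    intro h
    exact h01 (by rw [sub_eq_zero] at h ⊢; exact h.symm)
  have hc : (Qv * qv / (Qv * qv - 1)) * Ecoef 0 = 1 := by
    unfold Ecoef
    simp only [zero_add, pow_one]
    field_simp [qv_ne, Qv_ne]
  have hce : PowerSeries.C (Qv * qv / (Qv * qv - 1)) * PowerSeries.C (Ecoef 0)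
      = 1 := by
    rw [← map_mul, hc, map_one]
  apply mul_right_cancel₀ hS1ne
  rw [mul_assoc, PowerSeries.inv_mul_cancel _ hS1c, mul_one]
  symm
  calc PowerSeries.C (Qv * qv / (Qv * qv - 1)) * PowerSeries.X * contFracG m m
        * Spoly 1 (m + 1)
      = PowerSeries.C (Qv * qv / (Qv * qv - 1)) * PowerSeries.X *
          (contFracG m m * Spoly 1 (m + 1)) := by ring
    _ = PowerSeries.C (Qv * qv / (Qv * qv - 1)) * PowerSeries.X *
          (PowerSeries.C (Ecoef 0) * Spoly 2 m) := by rw [hM]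
    _ = PowerSeries.X * Spoly 2 m := by
          rw [show PowerSeries.C (Qv * qv / (Qv * qv - 1)) * PowerSeries.X *
            (PowerSeries.C (Ecoef 0) * Spoly 2 m) =
            (PowerSeries.C (Qv * qv / (Qv * qv - 1)) * PowerSeries.C (Ecoef 0)) *
            (PowerSeries.X * Spoly 2 m) from by ring, hce, one_mul]

end
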